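/- Let B ∈ ℝ^{m×n} be a nonnegative matrix without zero rows or columns, and let x ∈ ℝ^n, y ∈ ℝ^m be positive vectors. Let R, C be diagonal matrices with Bx = Ry and yᵀB = xᵀC. Then for all S ⊆ [m] and T ⊆ [n]: |⟨χ_S, Bχ_T⟩ − ⟨χ_S,Bx⟩⟨y,Bχ_T⟩/⟨y,Bx⟩| ≤ σ₂(R^{-1/2}BC^{-1/2}) · sqrt( (‖R^{1/2}χ_S‖² − ⟨χ_S,Bx⟩²/⟨y,Bx⟩) · (‖C^{1/2}χ_T‖² − ⟨y,Bχ_T⟩²/⟨y,Bx⟩) ), where σ₂ denotes the second largest singular value. -/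

import Mathlib

open Matrix Finset

lemma dot_expand {n : ℕ} (b : OrthonormalBasis (Fin n) ℝ (EuclideanSpace ℝ (Fin n))) (x y : Fin n → ℝ) :
    x ⬝ᵥ y = ∑ k, ((b k : Fin n → ℝ) ⬝ᵥ x) * ((b k : Fin n → ℝ) ⬝ᵥ y) := by
  have h := b.sum_inner_mul_inner (𝕜 := ℝ) (WithLp.toLp 2 x : EuclideanSpace ℝ (Fin n)) (WithLp.toLp 2 y : EuclideanSpace ℝ (Fin n))
  simp only [PiLp.inner_apply, PiLp.toLp_apply, RCLike.inner_apply', starRingEnd_apply, star_trivial] at h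
  rw [show x ⬝ᵥ y = ∑ i, x i * y i from rfl, ← h]
  refine Finset.sum_congr rfl fun k _ => ?_
  congr 1 <;> simp [dotProduct, mul_comm]

lemma quad_bound {n : ℕ} (hn : 2 ≤ n) (A : Matrix (Fin n) (Fin n) ℝ)
    (hA : A.IsHermitian) (s : Fin n → ℝ) (hsmono : Antitone s)
    (hs : ∃ e : Fin n ≃ Fin n, ∀ i, s i = hA.eigenvalues (e i))
    (v : Fin n → ℝ) (hv : v ≠ 0) (hAv : A *ᵥ v = v)
    (hle : ∀ k, hA.eigenvalues k ≤ 1)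
    (w : Fin n → ℝ) (hw : w ⬝ᵥ v = 0) :
    w ⬝ᵥ (A *ᵥ w) ≤ s ⟨1, Nat.lt_of_lt_of_le one_lt_two hn⟩ * (w ⬝ᵥ w) := by
  obtain ⟨e, he⟩ := hs
  set b := hA.eigenvectorBasis with hb
  set lam := hA.eigenvalues with hlam
  have hsym : Aᵀ = A := by
    rw [← Matrix.conjTranspose_eq_transpose_of_trivial]; exact hA
  have hbA : ∀ (k : Fin n) (z : Fin n → ℝ),
      (b k : Fin n → ℝ) ⬝ᵥ (A *ᵥ z) = lam k * ((b k : Fin n → ℝ) ⬝ᵥ z) := by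
    intro k z
    rw [Matrix.dotProduct_mulVec]
    have h2 : (b k : Fin n → ℝ) ᵥ* A = lam k • (b k : Fin n → ℝ) := by
      rw [← hsym, Matrix.vecMul_transpose]
      exact hA.mulVec_eigenvectorBasis k
    rw [h2, smul_dotProduct]
    rfl
  set c : Fin n → ℝ := fun k => (b k : Fin n → ℝ) ⬝ᵥ w with hc
  set d : Fin n → ℝ := fun k => (b k : Fin n → ℝ) ⬝ᵥ v with hd
  have hquad : w ⬝ᵥ (A *ᵥ w) = ∑ k, lam k * (c k * c k) := by
    rw [dot_expand b w (A *ᵥ w)]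
    refine Finset.sum_congr rfl fun k _ => ?_
    rw [show (b k : Fin n → ℝ) ⬝ᵥ w = c k from rfl, hbA]; ring
  have hnorm : w ⬝ᵥ w = ∑ k, c k * c k := dot_expand b w w
  have hd_eig : ∀ k, lam k * d k = d k := fun k => by
    have h3 := hbA k v; rw [hAv] at h3; exact h3.symm
  set z0 : Fin n := ⟨0, by omega⟩ with hz0
  have hs1le : ∀ k, k ≠ e z0 → lam k ≤ s ⟨1, by omega⟩ := by
    intro k hk
    have h4 : s (e.symm k) = lam k := by rw [he, Equiv.apply_symm_apply]
    rw [← h4]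
    apply hsmono
    have h5 : (e.symm k).val ≠ 0 := by
      intro h
      exact hk (by rw [← e.apply_symm_apply k]; congr 1; exact Fin.ext h)
    rw [Fin.le_def]; simpa using Nat.one_le_iff_ne_zero.2 h5
  have hcnn : ∀ k, 0 ≤ c k * c k := fun k => mul_self_nonneg _
  rw [hquad, hnorm, Finset.mul_sum]
  by_cases hcase : s ⟨0, by omega⟩ ≤ s ⟨1, by omega⟩
  · refine Finset.sum_le_sum fun k _ => ?_
    have : lam k ≤ s ⟨1, by omega⟩ := by
      by_cases hk : k = e z0
      · subst hk; rw [← he z0]; exact hcase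
      · exact hs1le k hk
    exact mul_le_mul_of_nonneg_right this (hcnn k)
  · -- s1 < s0 : top eigenvalue direction is spanned by v
    push_neg at hcase
    have hvw : w ⬝ᵥ v = ∑ k, c k * d k := dot_expand b w v
    have hvvd : v ⬝ᵥ v = ∑ k, d k * d k := dot_expand b v v
    have hvv : 0 < v ⬝ᵥ v := by
      have h0 : 0 ≤ v ⬝ᵥ v := Finset.sum_nonneg fun i _ => mul_self_nonneg _
      rcases h0.lt_or_eq with h | h
      · exact h
      · exfalso; apply hv; funext i
        have h7 := (Finset.sum_eq_zero_iff_of_nonneg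
          (fun i _ => mul_self_nonneg (v i))).mp h.symm i (Finset.mem_univ i)
        exact mul_self_eq_zero.mp h7
    have hex : ∃ k, d k ≠ 0 := by
      by_contra h
      push_neg at h
      rw [hvvd] at hvv
      simp [h] at hvv
    obtain ⟨k₁, hk₁⟩ := hex
    have hlamk₁ : lam k₁ = 1 := by
      have h9 : (lam k₁ - 1) * d k₁ = 0 := by
        rw [sub_mul, hd_eig k₁, one_mul, sub_self]
      rcases mul_eq_zero.mp h9 with h | h
      · linarith
      · exact absurd h hk₁
    have hs0 : s z0 = 1 := by
      have h1 : s z0 ≤ 1 := by rw [he]; exact hle _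
      have h2 : (1:ℝ) ≤ s z0 := by
        have h10 : s (e.symm k₁) = lam k₁ := by rw [he, Equiv.apply_symm_apply]
        rw [← hlamk₁, ← h10]
        exact hsmono (by simp [Fin.le_def, hz0])
      linarith
    have hdzero : ∀ k, k ≠ e z0 → d k = 0 := by
      intro k hk
      have hlt : lam k < 1 := lt_of_le_of_lt (hs1le k hk) (by rw [show (⟨0, by omega⟩ : Fin n) = z0 from rfl, hs0] at hcase; exact hcase)
      have h9 : (lam k - 1) * d k = 0 := by
        rw [sub_mul, hd_eig k, one_mul, sub_self]
      rcases mul_eq_zero.mp h9 with h | h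
      · linarith
      · exact h
    have hde0 : d (e z0) ≠ 0 := by
      intro h
      rw [hvvd, Finset.sum_eq_single (e z0)] at hvv
      · rw [h] at hvv; simp at hvv
      · intro k _ hk; rw [hdzero k hk]; ring
      · intro h'; exact absurd (Finset.mem_univ _) h'
    have hce0 : c (e z0) = 0 := by
      have h8 : w ⬝ᵥ v = c (e z0) * d (e z0) := by
        rw [hvw, Finset.sum_eq_single (e z0)]
        · intro k _ hk; rw [hdzero k hk]; ring
        · intro h'; exact absurd (Finset.mem_univ _) h'
      rw [hw] at h8
      rcases mul_eq_zero.mp h8.symm with h | h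
      · exact h
      · exact absurd h hde0
    refine Finset.sum_le_sum fun k _ => ?_
    by_cases hk : k = e z0
    · subst hk; rw [hce0]; simp
    · exact mul_le_mul_of_nonneg_right (hs1le k hk) (hcnn k)


set_option maxHeartbeats 1000000 in
/-- **General Expander Mixing Lemma for nonnegative matrices** (Theorem 8 of the paper). -/
theorem matrix_expander_mixing {m n : ℕ} (hn : 2 ≤ n)
    (B : Matrix (Fin m) (Fin n) ℝ)
    (hBnn : ∀ i j, 0 ≤ B i j)
    (hrow : ∀ i, ∃ j, B i j ≠ 0) (hcol : ∀ j, ∃ i, B i j ≠ 0)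
    (x : Fin n → ℝ) (y : Fin m → ℝ) (hx : ∀ j, 0 < x j) (hy : ∀ i, 0 < y i)
    (R : Matrix (Fin m) (Fin m) ℝ) (C : Matrix (Fin n) (Fin n) ℝ)
    (hR : R.IsDiag) (hC : C.IsDiag)
    (hRdef : B *ᵥ x = R *ᵥ y) (hCdef : y ᵥ* B = x ᵥ* C)
    (M : Matrix (Fin m) (Fin n) ℝ)
    (hM : M = (Matrix.diagonal fun i => (Real.sqrt (R i i))⁻¹) * B *
        (Matrix.diagonal fun j => (Real.sqrt (C j j))⁻¹))
    (hMM : (Mᵀ * M).IsHermitian)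
    -- `s` lists the eigenvalues of `MᵀM` in nonincreasing order, so that
    -- `Real.sqrt (s ⟨1,_⟩)` is the second largest singular value of `M`.
    (s : Fin n → ℝ) (hsmono : Antitone s)
    (hs : ∃ e : Fin n ≃ Fin n, ∀ i, s i = hMM.eigenvalues (e i))
    (S : Finset (Fin m)) (T : Finset (Fin n)) :
    |(fun i => if i ∈ S then (1 : ℝ) else 0) ⬝ᵥ
        (B *ᵥ fun j => if j ∈ T then (1 : ℝ) else 0)
      - ((fun i => if i ∈ S then (1 : ℝ) else 0) ⬝ᵥ (B *ᵥ x)) *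
          (y ⬝ᵥ (B *ᵥ fun j => if j ∈ T then (1 : ℝ) else 0)) / (y ⬝ᵥ (B *ᵥ x))|
      ≤ Real.sqrt (s ⟨1, by omega⟩) *
        Real.sqrt
          (((∑ i ∈ S, R i i) -
              ((fun i => if i ∈ S then (1 : ℝ) else 0) ⬝ᵥ (B *ᵥ x)) ^ 2 / (y ⬝ᵥ (B *ᵥ x))) *
            ((∑ j ∈ T, C j j) -
              (y ⬝ᵥ (B *ᵥ fun j => if j ∈ T then (1 : ℝ) else 0)) ^ 2 / (y ⬝ᵥ (B *ᵥ x)))) := by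
  -- trivial case m = 0
  rcases Nat.eq_zero_or_pos m with hm | hm
  · subst hm
    simp only [dotProduct, Finset.univ_eq_empty, Finset.sum_empty, zero_mul, zero_div, sub_zero,
      abs_zero]
    positivity
  set χS : Fin m → ℝ := fun i => if i ∈ S then (1 : ℝ) else 0 with hχS
  set χT : Fin n → ℝ := fun j => if j ∈ T then (1 : ℝ) else 0 with hχT
  -- positivity of diagonal entries
  have hBxpos : ∀ i, 0 < (B *ᵥ x) i := by
    intro i
    obtain ⟨j₀, hj₀⟩ := hrow i
    have : 0 < B i j₀ * x j₀ := mul_pos (lt_of_le_of_ne (hBnn i j₀) (Ne.symm hj₀)) (hx j₀)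
    exact Finset.sum_pos' (fun j _ => mul_nonneg (hBnn i j) (hx j).le) ⟨j₀, Finset.mem_univ _, this⟩
  have hrowsum : ∀ i, (B *ᵥ x) i = R i i * y i := by
    intro i
    rw [hRdef]
    show ∑ j, R i j * y j = R i i * y i
    refine Finset.sum_eq_single i (fun j _ hj => by rw [hR (Ne.symm hj)]; ring)
      (fun h => absurd (Finset.mem_univ _) h)
  have hRpos : ∀ i, 0 < R i i := by
    intro i
    have h1 := hBxpos i
    rw [hrowsum i] at h1
    by_contra h
    push_neg at h
    nlinarith [hy i]
  have hyBpos : ∀ j, 0 < (y ᵥ* B) j := by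
    intro j
    obtain ⟨i₀, hi₀⟩ := hcol j
    have : 0 < y i₀ * B i₀ j := mul_pos (hy i₀) (lt_of_le_of_ne (hBnn i₀ j) (Ne.symm hi₀))
    exact Finset.sum_pos' (fun i _ => mul_nonneg (hy i).le (hBnn i j)) ⟨i₀, Finset.mem_univ _, this⟩
  have hcolsum : ∀ j, (y ᵥ* B) j = C j j * x j := by
    intro j
    rw [hCdef]
    show ∑ i, x i * C i j = C j j * x j
    rw [Finset.sum_eq_single j (fun i _ hi => by rw [hC hi]; ring)
      (fun h => absurd (Finset.mem_univ _) h)]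
    ring
  have hCpos : ∀ j, 0 < C j j := by
    intro j
    have h1 := hyBpos j
    rw [hcolsum j] at h1
    by_contra h
    push_neg at h
    nlinarith [hx j]
  have hRs : ∀ i, Real.sqrt (R i i) ≠ 0 := fun i => (Real.sqrt_pos.mpr (hRpos i)).ne'
  have hCs : ∀ j, Real.sqrt (C j j) ≠ 0 := fun j => (Real.sqrt_pos.mpr (hCpos j)).ne'
  have hMij : ∀ i j, M i j = (Real.sqrt (R i i))⁻¹ * B i j * (Real.sqrt (C j j))⁻¹ := by
    intro i j
    simp [hM, Matrix.mul_diagonal, Matrix.diagonal_mul, mul_assoc]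
  have hBij : ∀ i j, B i j = Real.sqrt (R i i) * M i j * Real.sqrt (C j j) := by
    intro i j
    rw [hMij i j]
    field_simp
    rw [eq_div_iff (mul_ne_zero (hRs i) (hCs j))]
    ring
  have hMnn : ∀ i j, 0 ≤ M i j := fun i j => by
    rw [hMij i j]
    exact mul_nonneg (mul_nonneg (inv_nonneg.mpr (Real.sqrt_nonneg _)) (hBnn i j))
      (inv_nonneg.mpr (Real.sqrt_nonneg _))
  -- the scaled vectors
  set u : Fin m → ℝ := fun i => Real.sqrt (R i i) * y i with hu
  set v : Fin n → ℝ := fun j => Real.sqrt (C j j) * x j with hv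
  set f : Fin m → ℝ := fun i => Real.sqrt (R i i) * χS i with hf
  set g : Fin n → ℝ := fun j => Real.sqrt (C j j) * χT j with hg
  have hvpos : ∀ j, 0 < v j := fun j => mul_pos (Real.sqrt_pos.mpr (hCpos j)) (hx j)
  have hupos : ∀ i, 0 < u i := fun i => mul_pos (Real.sqrt_pos.mpr (hRpos i)) (hy i)
  have htrans : ∀ (p : Fin m → ℝ) (q : Fin n → ℝ),
      p ⬝ᵥ (B *ᵥ q) = (fun i => Real.sqrt (R i i) * p i) ⬝ᵥ
        (M *ᵥ fun j => Real.sqrt (C j j) * q j) := by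
    intro p q
    simp only [dotProduct, Matrix.mulVec, Finset.mul_sum]
    refine Finset.sum_congr rfl fun i _ => Finset.sum_congr rfl fun j _ => ?_
    rw [hBij i j]
    ring
  have hMv : M *ᵥ v = u := by
    funext i
    show ∑ j, M i j * v j = u i
    have h1 : ∀ j, M i j * v j = (Real.sqrt (R i i))⁻¹ * (B i j * x j) := by
      intro j
      rw [hMij i j, hv]
      field_simp [hRs i, hCs j]
    rw [Finset.sum_congr rfl fun j _ => h1 j, ← Finset.mul_sum]
    have h2 : ∑ j, B i j * x j = R i i * y i := hrowsum i
    rw [h2, hu]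
    have hsq : Real.sqrt (R i i) * Real.sqrt (R i i) = R i i := Real.mul_self_sqrt (hRpos i).le
    field_simp [hRs i]
    linear_combination (-(y i)) * hsq
  have hvMu : u ᵥ* M = v := by
    funext j
    show ∑ i, u i * M i j = v j
    have h1 : ∀ i, u i * M i j = (Real.sqrt (C j j))⁻¹ * (y i * B i j) := by
      intro i
      rw [hMij i j, hu]
      field_simp [hRs i, hCs j]
    rw [Finset.sum_congr rfl fun i _ => h1 i, ← Finset.mul_sum]
    have h2 : ∑ i, y i * B i j = C j j * x j := hcolsum j
    rw [h2, hv]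
    have hsq : Real.sqrt (C j j) * Real.sqrt (C j j) = C j j := Real.mul_self_sqrt (hCpos j).le
    field_simp [hCs j]
    linear_combination (-(x j)) * hsq
  have hA1 : χS ⬝ᵥ (B *ᵥ χT) = f ⬝ᵥ (M *ᵥ g) := htrans χS χT
  have hA2 : χS ⬝ᵥ (B *ᵥ x) = f ⬝ᵥ u := by rw [htrans χS x, ← hv, hMv]
  have hA3 : y ⬝ᵥ (B *ᵥ χT) = v ⬝ᵥ g := by
    rw [htrans y χT, ← hu, ← hg, Matrix.dotProduct_mulVec, hvMu]
  have hA4 : y ⬝ᵥ (B *ᵥ x) = u ⬝ᵥ u := by rw [htrans y x, ← hu, ← hv, hMv]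
  have hDv : v ⬝ᵥ v = u ⬝ᵥ u := by
    have h1 : u ⬝ᵥ (M *ᵥ v) = (u ᵥ* M) ⬝ᵥ v := Matrix.dotProduct_mulVec u M v
    rw [hMv, hvMu] at h1
    exact h1.symm
  -- sums of diagonals
  have hfF : f ⬝ᵥ f = ∑ i ∈ S, R i i := by
    show ∑ i, f i * f i = ∑ i ∈ S, R i i
    rw [show ∑ i, f i * f i = ∑ i, if i ∈ S then R i i else 0 from
      Finset.sum_congr rfl fun i _ => by
        by_cases h : i ∈ S <;>
          simp [hf, hχS, h, Real.mul_self_sqrt (hRpos i).le]]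
    simp
  have hgG : g ⬝ᵥ g = ∑ j ∈ T, C j j := by
    show ∑ j, g j * g j = ∑ j ∈ T, C j j
    rw [show ∑ j, g j * g j = ∑ j, if j ∈ T then C j j else 0 from
      Finset.sum_congr rfl fun j _ => by
        by_cases h : j ∈ T <;>
          simp [hg, hχT, h, Real.mul_self_sqrt (hCpos j).le]]
    simp
  -- contraction property: ‖Mw‖ ≤ ‖w‖
  have hcontr : ∀ w : Fin n → ℝ, (M *ᵥ w) ⬝ᵥ (M *ᵥ w) ≤ w ⬝ᵥ w := by
    intro w
    have hrowbd : ∀ i, (M *ᵥ w) i * (M *ᵥ w) i ≤ u i * ∑ j, M i j * (w j ^ 2 / v j) := by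
      intro i
      have habs : |(M *ᵥ w) i| ≤ ∑ j, M i j * |w j| := by
        calc |∑ j, M i j * w j| ≤ ∑ j, |M i j * w j| := Finset.abs_sum_le_sum_abs _ _
          _ = ∑ j, M i j * |w j| := Finset.sum_congr rfl fun j _ => by
              rw [abs_mul, abs_of_nonneg (hMnn i j)]
      have hcs : (∑ j, M i j * |w j|) ^ 2 ≤
          (∑ j, M i j * v j) * ∑ j, M i j * (w j ^ 2 / v j) := by
        refine Finset.sum_sq_le_sum_mul_sum_of_sq_eq_mul Finset.univ
          (fun j _ => mul_nonneg (hMnn i j) (hvpos j).le)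
          (fun j _ => mul_nonneg (hMnn i j) (div_nonneg (sq_nonneg _) (hvpos j).le)) (fun j _ => ?_)
        rw [mul_pow, sq_abs,
          show M i j * v j * (M i j * (w j ^ 2 / v j))
            = M i j ^ 2 * (w j ^ 2 / v j * v j) by ring,
          div_mul_cancel₀ _ (hvpos j).ne']
      have hMvu : ∑ j, M i j * v j = u i := congrFun hMv i
      calc (M *ᵥ w) i * (M *ᵥ w) i = |(M *ᵥ w) i| ^ 2 := by rw [sq_abs]; ring
        _ ≤ (∑ j, M i j * |w j|) ^ 2 := by
            have h0 : (0:ℝ) ≤ ∑ j, M i j * |w j| :=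
              Finset.sum_nonneg fun j _ => mul_nonneg (hMnn i j) (abs_nonneg _)
            exact pow_le_pow_left₀ (abs_nonneg _) habs 2
        _ ≤ (∑ j, M i j * v j) * ∑ j, M i j * (w j ^ 2 / v j) := hcs
        _ = u i * ∑ j, M i j * (w j ^ 2 / v j) := by rw [hMvu]
    calc (M *ᵥ w) ⬝ᵥ (M *ᵥ w) = ∑ i, (M *ᵥ w) i * (M *ᵥ w) i := rfl
      _ ≤ ∑ i, u i * ∑ j, M i j * (w j ^ 2 / v j) := Finset.sum_le_sum fun i _ => hrowbd i
      _ = ∑ i, ∑ j, u i * (M i j * (w j ^ 2 / v j)) := by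
          exact Finset.sum_congr rfl fun i _ => Finset.mul_sum _ _ _
      _ = ∑ j, ∑ i, u i * (M i j * (w j ^ 2 / v j)) := Finset.sum_comm
      _ = ∑ j, (w j ^ 2 / v j) * ∑ i, u i * M i j := by
          refine Finset.sum_congr rfl fun j _ => ?_
          rw [Finset.mul_sum]
          exact Finset.sum_congr rfl fun i _ => by ring
      _ = ∑ j, (w j ^ 2 / v j) * v j := by
          refine Finset.sum_congr rfl fun j _ => ?_
          congr 1
          exact congrFun hvMu j
      _ = ∑ j, w j ^ 2 := Finset.sum_congr rfl fun j _ =>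
          div_mul_cancel₀ _ (hvpos j).ne'
      _ = w ⬝ᵥ w := Finset.sum_congr rfl fun j _ => (sq (w j)).symm ▸ by ring
  -- eigenvalue bounds
  have hquadform : ∀ z : Fin n → ℝ, z ⬝ᵥ ((Mᵀ * M) *ᵥ z) = (M *ᵥ z) ⬝ᵥ (M *ᵥ z) := by
    intro z
    rw [← Matrix.mulVec_mulVec, Matrix.dotProduct_mulVec, Matrix.vecMul_transpose]
  have heig : ∀ k, 0 ≤ hMM.eigenvalues k ∧ hMM.eigenvalues k ≤ 1 := by
    intro k
    set bk : Fin n → ℝ := ⇑(hMM.eigenvectorBasis k) with hbk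
    have h1 : (Mᵀ * M) *ᵥ bk = hMM.eigenvalues k • bk := hMM.mulVec_eigenvectorBasis k
    have hnorm1 : bk ⬝ᵥ bk = 1 := by
      have h := orthonormal_iff_ite.mp hMM.eigenvectorBasis.orthonormal k k
      simp only [if_pos rfl, PiLp.inner_apply, RCLike.inner_apply, starRingEnd_apply,
        star_trivial] at h
      simpa [dotProduct] using h
    have h2 : bk ⬝ᵥ ((Mᵀ * M) *ᵥ bk) = hMM.eigenvalues k := by
      rw [h1, dotProduct_smul, hnorm1, smul_eq_mul, mul_one]
    constructor
    · rw [← h2, hquadform]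
      exact Finset.sum_nonneg fun i _ => mul_self_nonneg _
    · rw [← h2, hquadform]
      calc (M *ᵥ bk) ⬝ᵥ (M *ᵥ bk) ≤ bk ⬝ᵥ bk := hcontr bk
        _ = 1 := hnorm1
  have hs1nn : 0 ≤ s ⟨1, by omega⟩ := by
    obtain ⟨e, he⟩ := hs
    rw [he]
    exact (heig _).1
  -- MᵀM v = v
  have hAv1 : (Mᵀ * M) *ᵥ v = v := by
    rw [← Matrix.mulVec_mulVec, hMv, Matrix.mulVec_transpose, hvMu]
  have hvne : v ≠ 0 := by
    intro h
    have := congrFun h ⟨0, by omega⟩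
    exact absurd this (hvpos _).ne'
  -- main estimate
  have hDpos : 0 < u ⬝ᵥ u := by
    have : Nonempty (Fin m) := ⟨⟨0, hm⟩⟩
    exact Finset.sum_pos (fun i _ => mul_pos (hupos i) (hupos i)) Finset.univ_nonempty
  set D := u ⬝ᵥ u with hD
  set α := (f ⬝ᵥ u) / D with hα
  set β := (v ⬝ᵥ g) / D with hβ
  set fp : Fin m → ℝ := f - α • u with hfp
  set gp : Fin n → ℝ := g - β • v with hgp
  have hgpv : gp ⬝ᵥ v = 0 := by
    have h1 : gp ⬝ᵥ v = g ⬝ᵥ v - β * (v ⬝ᵥ v) := by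
      rw [hgp, sub_dotProduct, smul_dotProduct, smul_eq_mul]
    rw [h1, hDv, hβ, dotProduct_comm g v]
    field_simp
    ring
  have hmain : f ⬝ᵥ (M *ᵥ g) - (f ⬝ᵥ u) * (v ⬝ᵥ g) / D = fp ⬝ᵥ (M *ᵥ gp) := by
    rw [hfp, hgp, Matrix.mulVec_sub, Matrix.mulVec_smul, hMv, sub_dotProduct,
      smul_dotProduct, dotProduct_sub, dotProduct_sub,
      dotProduct_smul, dotProduct_smul]
    have huMg : u ⬝ᵥ (M *ᵥ g) = v ⬝ᵥ g := by
      rw [Matrix.dotProduct_mulVec, hvMu]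
    rw [huMg, hα, hβ]
    simp only [smul_eq_mul]
    field_simp
    ring
  have hfpf : fp ⬝ᵥ fp = f ⬝ᵥ f - (f ⬝ᵥ u) ^ 2 / D := by
    rw [hfp, sub_dotProduct, smul_dotProduct, dotProduct_sub,
      dotProduct_sub, dotProduct_smul, dotProduct_smul,
      dotProduct_comm u f, hα]
    simp only [smul_eq_mul]
    field_simp
    ring
  have hgpg : gp ⬝ᵥ gp = g ⬝ᵥ g - (v ⬝ᵥ g) ^ 2 / D := by
    rw [hgp, sub_dotProduct, smul_dotProduct, dotProduct_sub,
      dotProduct_sub, dotProduct_smul, dotProduct_smul,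
      dotProduct_comm g v, hβ, hDv]
    simp only [smul_eq_mul]
    field_simp
    ring
  have hq : gp ⬝ᵥ ((Mᵀ * M) *ᵥ gp) ≤ s ⟨1, by omega⟩ * (gp ⬝ᵥ gp) :=
    quad_bound hn (Mᵀ * M) hMM s hsmono hs v hvne hAv1 (fun k => (heig k).2) gp hgpv
  have hMgp : (M *ᵥ gp) ⬝ᵥ (M *ᵥ gp) ≤ s ⟨1, by omega⟩ * (gp ⬝ᵥ gp) := by
    rw [← hquadform]; exact hq
  have hcs2 : (fp ⬝ᵥ (M *ᵥ gp)) ^ 2 ≤ (fp ⬝ᵥ fp) * ((M *ᵥ gp) ⬝ᵥ (M *ᵥ gp)) := by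
    have := Finset.sum_mul_sq_le_sq_mul_sq Finset.univ fp (M *ᵥ gp)
    simpa [dotProduct, sq] using this
  have hfpnn : 0 ≤ fp ⬝ᵥ fp := Finset.sum_nonneg fun i _ => mul_self_nonneg _
  have hgpnn : 0 ≤ gp ⬝ᵥ gp := Finset.sum_nonneg fun j _ => mul_self_nonneg _
  have hMgpnn : 0 ≤ (M *ᵥ gp) ⬝ᵥ (M *ᵥ gp) := Finset.sum_nonneg fun i _ => mul_self_nonneg _
  -- final chain
  rw [hA1, hA2, hA3, hA4, ← hfF, ← hgG, hmain, ← hfpf, ← hgpg]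
  calc |fp ⬝ᵥ (M *ᵥ gp)|
      = Real.sqrt ((fp ⬝ᵥ (M *ᵥ gp)) ^ 2) := (Real.sqrt_sq_eq_abs _).symm
    _ ≤ Real.sqrt ((fp ⬝ᵥ fp) * ((M *ᵥ gp) ⬝ᵥ (M *ᵥ gp))) := Real.sqrt_le_sqrt hcs2
    _ ≤ Real.sqrt ((fp ⬝ᵥ fp) * (s ⟨1, by omega⟩ * (gp ⬝ᵥ gp))) :=
        Real.sqrt_le_sqrt (mul_le_mul_of_nonneg_left hMgp hfpnn)
    _ = Real.sqrt (s ⟨1, by omega⟩) * Real.sqrt ((fp ⬝ᵥ fp) * (gp ⬝ᵥ gp)) := by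
        rw [show (fp ⬝ᵥ fp) * (s ⟨1, by omega⟩ * (gp ⬝ᵥ gp)) =
          s ⟨1, by omega⟩ * ((fp ⬝ᵥ fp) * (gp ⬝ᵥ gp)) by ring, Real.sqrt_mul hs1nn]
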